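/- Let $A\in\mathbb{R}^{n\times m}$ have $\operatorname{rank}(A)=n-1$ or $n$, and $B\in\mathbb{R}^{n\times m}$ have $\operatorname{rank}(B)\le 1$. The $2n\times 2n$ matrix $\begin{pmatrix}\bar A & 0 & \bar B & 0\\ 0 & \bar A & 0 & \bar B\end{pmatrix}$, where $\bar A$ consists of selected columns of $A$ and $\bar B$ of selected columns of $B$ with total selected count $n$ per copy, is invertible if and only if either (i) $\bar B$ is empty and $\bar A$ is an invertible $n\times n$ submatrix of $A$, or (ii) $\bar B$ is a single column $b$, $\bar A$ has $n-1$ columns, and $\operatorname{rank}(\bar A\mid b)=n$. -/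

import Mathlib

open Matrix

private lemma rank_submatrix_colEquiv {l o o' : Type*} [Fintype o] [Fintype o']
    (A : Matrix l o ℝ) (e : o' ≃ o) : (A.submatrix id e).rank = A.rank := by
  rw [rank_eq_finrank_span_cols, rank_eq_finrank_span_cols,
    show (A.submatrix id ⇑e).col = A.col ∘ e from rfl, e.surjective.range_comp]

private def submoduleProdLinEquiv {M N : Type*} [AddCommGroup M] [AddCommGroup N]
    [Module ℝ M] [Module ℝ N] (S : Submodule ℝ M) (T : Submodule ℝ N) :
    (S.prod T) ≃ₗ[ℝ] S × T where
  toFun x := (⟨x.1.1, x.2.1⟩, ⟨x.1.2, x.2.2⟩)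
  invFun p := ⟨(p.1.1, p.2.1), ⟨p.1.2, p.2.2⟩⟩
  map_add' _ _ := rfl
  map_smul' _ _ := rfl
  left_inv _ := rfl
  right_inv _ := rfl

private lemma range_prodMap' {M N M' N' : Type*} [AddCommGroup M] [AddCommGroup N]
    [AddCommGroup M'] [AddCommGroup N'] [Module ℝ M] [Module ℝ N] [Module ℝ M'] [Module ℝ N']
    (f : M →ₗ[ℝ] M') (g : N →ₗ[ℝ] N') :
    LinearMap.range (f.prodMap g) = (LinearMap.range f).prod (LinearMap.range g) := by
  ext ⟨x, y⟩
  constructor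
  · rintro ⟨⟨a, b⟩, h⟩
    rw [LinearMap.prodMap_apply, Prod.mk.injEq] at h
    exact ⟨⟨a, h.1⟩, ⟨b, h.2⟩⟩
  · rintro ⟨⟨a, ha⟩, ⟨b, hb⟩⟩
    exact ⟨(a, b), by simp [ha, hb]⟩

private lemma rank_fromBlocks_diag {ρ₁ ρ₂ c₁ c₂ : Type*} [Fintype ρ₁] [Fintype ρ₂]
    [Fintype c₁] [Fintype c₂] (X : Matrix ρ₁ c₁ ℝ) (Y : Matrix ρ₂ c₂ ℝ) :
    (fromBlocks X 0 0 Y).rank = X.rank + Y.rank := by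
  set e₁ := LinearEquiv.sumArrowLequivProdArrow c₁ c₂ ℝ ℝ
  set e₂ := LinearEquiv.sumArrowLequivProdArrow ρ₁ ρ₂ ℝ ℝ
  have key : (fromBlocks X 0 0 Y).mulVecLin
      = (e₂.symm.toLinearMap.comp ((X.mulVecLin.prodMap Y.mulVecLin).comp e₁.toLinearMap)) := by
    apply LinearMap.ext
    intro v
    have hv : v = Sum.elim (v ∘ Sum.inl) (v ∘ Sum.inr) := (Sum.elim_comp_inl_inr v).symm
    simp only [mulVecLin_apply, LinearMap.comp_apply]
    conv_lhs => rw [hv]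
    rw [fromBlocks_mulVec]
    funext x
    cases x <;> simp [e₁, e₂, LinearEquiv.sumArrowLequivProdArrow, Equiv.sumArrowEquivProdArrow, Sum.elim_comp_inl, Sum.elim_comp_inr]
  rw [Matrix.rank, key, LinearMap.range_comp, LinearEquiv.finrank_map_eq,
    LinearMap.range_comp_of_range_eq_top _ (LinearEquiv.range e₁), range_prodMap']
  rw [(submoduleProdLinEquiv _ _).finrank_eq, Module.finrank_prod]
  rfl

/-- Let `A ∈ ℝ^{n×m}` have rank `n-1` or `n`, and `B ∈ ℝ^{n×m}` have rank at most `1`.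
For column selections `Ā` (of `a` columns of `A`) and `B̄` (of `b` columns of `B`) with
`a + b = n` and `b ≤ 1`, the `2n×2n` matrix `[[Ā, 0, B̄, 0], [0, Ā, 0, B̄]]` is invertible
(has full rank `2n`) if and only if either (i) `b = 0` and `Ā` is an invertible (full-rank)
`n×n` submatrix of `A`, or (ii) `b = 1`, `Ā` has `n-1` columns, and `rank (Ā | B̄) = n`. -/
theorem block_submatrix_invertible_iff (n m a b : ℕ)
    (hab : a + b = n) (hb : b ≤ 1)
    (A B : Matrix (Fin n) (Fin m) ℝ)
    (hA : A.rank = n - 1 ∨ A.rank = n) (hB : B.rank ≤ 1)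
    (sA : Fin a → Fin m) (hsA : Function.Injective sA)
    (sB : Fin b → Fin m) (hsB : Function.Injective sB) :
    (Matrix.fromBlocks
        (Matrix.fromCols (A.submatrix id sA) 0) (Matrix.fromCols (B.submatrix id sB) 0)
        (Matrix.fromCols 0 (A.submatrix id sA)) (Matrix.fromCols 0 (B.submatrix id sB))
      ).rank = 2 * n
    ↔ ((b = 0 ∧ (A.submatrix id sA).rank = n) ∨
       (b = 1 ∧ a = n - 1 ∧
        (Matrix.fromCols (A.submatrix id sA) (B.submatrix id sB)).rank = n)) := by
  set Abar := A.submatrix id sA with hAb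
  set Bbar := B.submatrix id sB with hBb
  set C := Matrix.fromCols Abar Bbar with hC
  have hMN : (Matrix.fromBlocks
        (Matrix.fromCols Abar 0) (Matrix.fromCols Bbar 0)
        (Matrix.fromCols 0 Abar) (Matrix.fromCols 0 Bbar))
      = (Matrix.fromBlocks C 0 0 C).submatrix id
          (Equiv.sumSumSumComm (Fin a) (Fin a) (Fin b) (Fin b)) := by
    ext i j
    rcases i with i | i <;> rcases j with (j | j) | (j | j) <;>
      simp [C, fromBlocks, fromCols, Equiv.sumSumSumComm]
  rw [hMN, rank_submatrix_colEquiv, rank_fromBlocks_diag]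
  have hCrank : C.rank ≤ n := by
    have := C.rank_le_card_height
    simpa using this
  -- now case on b
  rcases Nat.le_one_iff_eq_zero_or_eq_one.mp hb with rfl | rfl
  · -- b = 0
    have hn : a = n := by omega
    subst hn
    have hAC : Abar.rank = C.rank := by
      have h1 : C.submatrix id (Equiv.sumEmpty (Fin a) (Fin 0)).symm = Abar := by
        ext i j; rfl
      rw [← rank_submatrix_colEquiv C (Equiv.sumEmpty (Fin a) (Fin 0)).symm, h1]
    constructor
    · intro h
      exact Or.inl ⟨rfl, by omega⟩
    · rintro (⟨-, h⟩ | ⟨h, -⟩)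
      · omega
      · omega
  · -- b = 1
    constructor
    · intro h
      exact Or.inr ⟨rfl, by omega, by omega⟩
    · rintro (⟨h, -⟩ | ⟨-, -, h⟩)
      · omega
      · omega
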